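/- arXiv:1106.2933 — 2 statements merged into one kernel-verified Lean document; each statement's English description precedes it below -/
import Mathlib

section
/- In the anyonic Q-Fock space over L²(T,σ), for Δ of finite measure, the squared norm of the n-fold Q-symmetric power satisfies ‖χ_Δ^{⊛n}‖²_{F^Q} = |[n]_q!|² σ(Δ)ⁿ/n!, where the Fock norm on the n-particle space carries weight n! and [n]_q! = ∏_{k=1}^n (1-q^k)/(1-q) for q ≠ 1. -/
open Finset MeasureTheory
open scoped ENNReal

/-- `Q_π(t_1,…,t_n) = ∏_{i<j, π(i)>π(j)} Q(t_i,t_j)`. -/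
def Qpi {T : Type*} (Q : T → T → ℂ) {n : ℕ} (π : Equiv.Perm (Fin n)) (t : Fin n → T) : ℂ :=
  ∏ p ∈ Finset.univ.filter (fun p : Fin n × Fin n => p.1 < p.2 ∧ π p.2 < π p.1),
    Q (t p.1) (t p.2)

/-- The `Q`-symmetrization `P_n f = (1/n!) Σ_π Q_π(t) f(t∘π⁻¹)`. -/
noncomputable def Psym {T : Type*} (Q : T → T → ℂ) {n : ℕ} (f : (Fin n → T) → ℂ) :
    (Fin n → T) → ℂ :=
  fun t => ((n.factorial : ℂ))⁻¹ * ∑ π : Equiv.Perm (Fin n), Qpi Q π t * f (t ∘ ⇑π⁻¹)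

/-- weight of a permutation: `q^{inv τ}` written as a product over inversions. -/
noncomputable def qWgt (q : ℂ) {n : ℕ} (τ : Equiv.Perm (Fin n)) : ℂ :=
  ∏ p ∈ Finset.univ.filter (fun p : Fin n × Fin n => p.1 < p.2 ∧ τ p.2 < τ p.1), q

lemma qWgt_eq_prod_ite (q : ℂ) {n : ℕ} (τ : Equiv.Perm (Fin n)) :
    qWgt q τ = ∏ a : Fin n, ∏ b : Fin n, (if a < b ∧ τ b < τ a then q else 1) := by
  rw [qWgt, Finset.prod_filter, ← Fintype.prod_prod_type']

def insPerm {n : ℕ} (v : Fin (n+1)) (σ : Equiv.Perm (Fin n)) : Equiv.Perm (Fin (n+1)) :=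
  (finSuccEquiv n).trans ((Equiv.optionCongr σ).trans (finSuccEquiv' v).symm)

@[simp] lemma insPerm_zero {n : ℕ} (v : Fin (n+1)) (σ : Equiv.Perm (Fin n)) :
    insPerm v σ 0 = v := by
  simp [insPerm]

@[simp] lemma insPerm_succ {n : ℕ} (v : Fin (n+1)) (σ : Equiv.Perm (Fin n)) (j : Fin n) :
    insPerm v σ j.succ = v.succAbove (σ j) := by
  simp [insPerm]

lemma insPerm_bijective {n : ℕ} :
    Function.Bijective (fun p : Fin (n+1) × Equiv.Perm (Fin n) => insPerm p.1 p.2) := by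
  rw [Fintype.bijective_iff_injective_and_card]
  constructor
  · rintro ⟨v, σ⟩ ⟨v', σ'⟩ h
    have h0 : v = v' := by
      have := congrArg (fun π : Equiv.Perm (Fin (n+1)) => π 0) h
      simpa using this
    subst h0
    have hσ : σ = σ' := Equiv.ext fun j => by
      have := congrArg (fun π : Equiv.Perm (Fin (n+1)) => π j.succ) h
      simp only [insPerm_succ] at this
      exact Fin.succAbove_right_injective this
    simp [hσ]
  · simp [Fintype.card_perm, Nat.factorial_succ]

lemma card_castSucc_lt {n : ℕ} (v : Fin (n+1)) :
    ((Finset.univ : Finset (Fin n)).filter fun y => y.castSucc < v).card = (v : ℕ) := by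
  rw [← Finset.card_range (v : ℕ)]
  apply Finset.card_bij (fun (y : Fin n) _ => (y : ℕ))
  · intro y hy
    simp only [Finset.mem_filter, Fin.lt_def, Fin.coe_castSucc] at hy
    simpa using hy.2
  · intro y _ y' _ h
    exact Fin.val_injective h
  · intro m hm
    simp only [Finset.mem_range] at hm
    have hmn : m < n := lt_of_lt_of_le hm (Nat.lt_succ_iff.mp v.2)
    exact ⟨⟨m, hmn⟩, by simp [Fin.lt_def, hm], rfl⟩

lemma qWgt_insPerm (q : ℂ) {n : ℕ} (v : Fin (n+1)) (σ : Equiv.Perm (Fin n)) :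
    qWgt q (insPerm v σ) = q ^ (v : ℕ) * qWgt q σ := by
  rw [qWgt_eq_prod_ite, Fin.prod_univ_succ]
  have h0 : (∏ b : Fin (n+1),
      (if (0 : Fin (n+1)) < b ∧ insPerm v σ b < insPerm v σ 0 then q else 1)) = q ^ (v : ℕ) := by
    rw [Fin.prod_univ_succ]
    have e1 : (if (0 : Fin (n+1)) < 0 ∧ insPerm v σ 0 < insPerm v σ 0 then q else 1) = 1 := by
      simp
    rw [e1, one_mul]
    have e2 : ∀ j : Fin n,
        (if (0 : Fin (n+1)) < j.succ ∧ insPerm v σ j.succ < insPerm v σ 0 then q else 1)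
        = (if (σ j).castSucc < v then q else 1) := by
      intro j
      simp only [insPerm_zero, insPerm_succ, Fin.succ_pos, true_and,
        Fin.succAbove_lt_iff_castSucc_lt]
    rw [Finset.prod_congr rfl (fun j _ => e2 j)]
    rw [show (∏ j : Fin n, if (σ j).castSucc < v then q else 1)
        = ∏ y : Fin n, (if y.castSucc < v then q else 1) from
      Equiv.prod_comp σ (fun y : Fin n => if y.castSucc < v then q else 1)]
    rw [← Finset.prod_filter, Finset.prod_const, card_castSucc_lt]
  rw [h0]
  congr 1
  have e3 : ∀ i : Fin n, (∏ b : Fin (n+1),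
      (if (i.succ : Fin (n+1)) < b ∧ insPerm v σ b < insPerm v σ i.succ then q else 1))
      = ∏ j : Fin n, (if i < j ∧ σ j < σ i then q else 1) := by
    intro i
    rw [Fin.prod_univ_succ]
    have e1 : (if (i.succ : Fin (n+1)) < 0 ∧ insPerm v σ 0 < insPerm v σ i.succ then q else 1)
        = 1 := by
      simp [Fin.not_lt_zero]
    rw [e1, one_mul]
    apply Finset.prod_congr rfl
    intro j _
    simp only [insPerm_succ, Fin.succ_lt_succ_iff, Fin.succAbove_lt_succAbove_iff]
  rw [Finset.prod_congr rfl (fun i _ => e3 i), qWgt_eq_prod_ite]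

lemma sum_qWgt (q : ℂ) : ∀ n : ℕ, (∑ π : Equiv.Perm (Fin n), qWgt q π)
    = ∏ k ∈ Finset.range n, ∑ i ∈ Finset.range (k + 1), q ^ i := by
  intro n
  induction n with
  | zero => simp [qWgt]
  | succ n ih =>
    rw [← Fintype.sum_bijective _ insPerm_bijective _ (qWgt q) (fun _ => rfl)]
    rw [Fintype.sum_prod_type]
    simp only [qWgt_insPerm]
    rw [Finset.prod_range_succ, ← ih]
    calc ∑ v : Fin (n+1), ∑ σ : Equiv.Perm (Fin n), q ^ (v:ℕ) * qWgt q σ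
        = ∑ v : Fin (n+1), q ^ (v:ℕ) * ∑ σ : Equiv.Perm (Fin n), qWgt q σ := by
          simp [Finset.mul_sum]
      _ = (∑ v : Fin (n+1), q ^ (v:ℕ)) * ∑ σ : Equiv.Perm (Fin n), qWgt q σ := by
          rw [Finset.sum_mul]
      _ = (∑ σ : Equiv.Perm (Fin n), qWgt q σ) * ∑ i ∈ Finset.range (n+1), q ^ i := by
          rw [mul_comm]; congr 1; exact Fin.sum_univ_eq_sum_range (fun i => q ^ i) (n+1)

section SortPart
variable {T : Type*} [LinearOrder T]

lemma Qpi_eq (q : ℂ) (hq : ‖q‖ = 1) (Q : T → T → ℂ)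
    (hQ : ∀ s t, Q s t = if s < t then q else (starRingEnd ℂ) q)
    {n : ℕ} (t : Fin n → T)
    (ρ : Equiv.Perm (Fin n)) (hρ : StrictMono (t ∘ ρ))
    (π : Equiv.Perm (Fin n)) :
    Qpi Q π t = qWgt q (π * ρ) * qWgt ((starRingEnd ℂ) q) ρ := by
  have hqc : q * (starRingEnd ℂ) q = 1 := by
    rw [Complex.mul_conj]
    norm_cast
    rw [← Complex.sq_norm, hq]; norm_num
  have hlt : ∀ i j : Fin n, ρ.symm i < ρ.symm j → t i < t j := by
    intro i j h
    have := hρ h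
    simpa using this
  -- rewrite the three products over the common index set P
  have eL : Qpi Q π t = ∏ p ∈ Finset.univ.filter (fun p : Fin n × Fin n => p.1 < p.2),
      (if π p.2 < π p.1 then Q (t p.1) (t p.2) else 1) := by
    rw [Qpi, ← Finset.prod_filter, Finset.filter_filter]
  have eR : qWgt q (π * ρ) * qWgt ((starRingEnd ℂ) q) ρ
      = ∏ p ∈ Finset.univ.filter (fun p : Fin n × Fin n => p.1 < p.2),
        ((if π (ρ p.2) < π (ρ p.1) then q else 1) *
          (if ρ p.2 < ρ p.1 then (starRingEnd ℂ) q else 1)) := by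
    rw [Finset.prod_mul_distrib, qWgt, qWgt, ← Finset.prod_filter, ← Finset.prod_filter,
      Finset.filter_filter, Finset.filter_filter]
    rfl
  rw [eL, eR]
  apply Finset.prod_nbij'
    (i := fun p : Fin n × Fin n =>
      if ρ.symm p.1 < ρ.symm p.2 then (ρ.symm p.1, ρ.symm p.2) else (ρ.symm p.2, ρ.symm p.1))
    (j := fun p : Fin n × Fin n =>
      if ρ p.1 < ρ p.2 then (ρ p.1, ρ p.2) else (ρ p.2, ρ p.1))
  · rintro ⟨x, y⟩ hxy
    simp only [Finset.mem_filter, Finset.mem_univ, true_and] at hxy ⊢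
    have hne : ρ.symm x ≠ ρ.symm y := fun h => absurd (ρ.symm.injective h) (ne_of_lt hxy)
    rcases lt_or_gt_of_ne hne with h | h
    · simp [h]
    · simp [not_lt_of_gt h, h]
  · rintro ⟨x, y⟩ hxy
    simp only [Finset.mem_filter, Finset.mem_univ, true_and] at hxy ⊢
    have hne : ρ x ≠ ρ y := fun h => absurd (ρ.injective h) (ne_of_lt hxy)
    rcases lt_or_gt_of_ne hne with h | h
    · simp [h]
    · simp [not_lt_of_gt h, h]
  · rintro ⟨x, y⟩ hxy
    simp only [Finset.mem_filter, Finset.mem_univ, true_and] at hxy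
    by_cases h : ρ.symm x < ρ.symm y
    · simp [h, hxy, Equiv.apply_symm_apply, not_lt_of_gt hxy]
    · simp [h, hxy, Equiv.apply_symm_apply, not_lt_of_gt hxy]
  · rintro ⟨x, y⟩ hxy
    simp only [Finset.mem_filter, Finset.mem_univ, true_and] at hxy
    by_cases h : ρ x < ρ y
    · simp [h, hxy, Equiv.symm_apply_apply, not_lt_of_gt hxy]
    · simp [h, hxy, Equiv.symm_apply_apply, not_lt_of_gt hxy]
  · rintro ⟨x, y⟩ hxy
    simp only [Finset.mem_filter, Finset.mem_univ, true_and] at hxy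
    have hne : ρ.symm x ≠ ρ.symm y := fun h => absurd (ρ.symm.injective h) (ne_of_lt hxy)
    have hyx : ¬ y < x := asymm hxy
    rcases lt_or_gt_of_ne hne with h | h
    · have htxy : t x < t y := hlt x y h
      simp only [h, if_true]
      simp only [Equiv.apply_symm_apply, hyx, if_false, mul_one]
      rw [hQ, if_pos htxy]
    · have htyx : t y < t x := hlt y x h
      have h' : ¬ ρ.symm x < ρ.symm y := asymm h
      simp only [h', if_false]
      simp only [Equiv.apply_symm_apply, hxy, if_true]
      rw [hQ, if_neg (not_lt_of_gt htyx)]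
      rcases lt_or_gt_of_ne
          (show π x ≠ π y from fun hh => absurd (π.injective hh) (ne_of_lt hxy)) with hh | hh
      · rw [if_neg (asymm hh), if_pos hh, hqc]
      · rw [if_pos hh, if_neg (asymm hh), one_mul]
end SortPart

lemma abs_sum_Qpi (q : ℂ) (hq : ‖q‖ = 1) {T : Type*} [LinearOrder T] (Q : T → T → ℂ)
    (hQ : ∀ s t, Q s t = if s < t then q else (starRingEnd ℂ) q)
    {n : ℕ} (t : Fin n → T) (ht : Function.Injective t) :
    ‖∑ π : Equiv.Perm (Fin n), Qpi Q π t‖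
      = ‖∏ k ∈ Finset.range n, ∑ i ∈ Finset.range (k + 1), q ^ i‖ := by
  set ρ := Tuple.sort t with hρdef
  have hmono : StrictMono (t ∘ ρ) :=
    (Tuple.monotone_sort t).strictMono_of_injective (ht.comp ρ.injective)
  have e : ∀ π : Equiv.Perm (Fin n), Qpi Q π t = qWgt q (π * ρ) * qWgt ((starRingEnd ℂ) q) ρ :=
    Qpi_eq q hq Q hQ t ρ hmono
  rw [Finset.sum_congr rfl (fun π _ => e π), ← Finset.sum_mul]
  have hre : (∑ π : Equiv.Perm (Fin n), qWgt q (π * ρ)) = ∑ π : Equiv.Perm (Fin n), qWgt q π :=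
    Fintype.sum_bijective (fun π => π * ρ) (Group.mulRight_bijective ρ) _ (qWgt q)
      (fun _ => rfl)
  rw [hre, norm_mul, sum_qWgt]
  have habs1 : ‖qWgt ((starRingEnd ℂ) q) ρ‖ = 1 := by
    rw [qWgt, Finset.prod_const, norm_pow, Complex.norm_conj, hq, one_pow]
  rw [habs1, mul_one]

lemma psym_pointwise {T : Type*} [LinearOrder T] (q : ℂ) (hq : ‖q‖ = 1)
    (Q : T → T → ℂ) (hQ : ∀ s t, Q s t = if s < t then q else (starRingEnd ℂ) q)
    (Δ : Set T) {n : ℕ} (t : Fin n → T) (ht : Function.Injective t) :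
    ‖Psym Q (fun s => ∏ i : Fin n, Set.indicator Δ (fun _ => (1 : ℂ)) (s i)) t‖ ^ 2
      = Set.indicator (Set.pi Set.univ fun _ : Fin n => Δ)
          (fun _ => (‖∏ k ∈ Finset.range n, ∑ i ∈ Finset.range (k + 1), q ^ i‖
            / (n.factorial : ℝ)) ^ 2) t := by
  have hI : ∀ π : Equiv.Perm (Fin n),
      (∏ i : Fin n, Set.indicator Δ (fun _ => (1 : ℂ)) ((t ∘ ⇑π⁻¹) i))
        = ∏ i : Fin n, Set.indicator Δ (fun _ => (1 : ℂ)) (t i) := by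
    intro π
    exact Equiv.prod_comp π⁻¹ (fun i => Set.indicator Δ (fun _ => (1 : ℂ)) (t i))
  by_cases hmem : t ∈ Set.pi Set.univ fun _ : Fin n => Δ
  · have hI1 : (∏ i : Fin n, Set.indicator Δ (fun _ => (1 : ℂ)) (t i)) = 1 := by
      apply Finset.prod_eq_one
      intro i _
      exact Set.indicator_of_mem (hmem i (Set.mem_univ i)) _
    have : Psym Q (fun s => ∏ i : Fin n, Set.indicator Δ (fun _ => (1 : ℂ)) (s i)) t
        = ((n.factorial : ℂ))⁻¹ * ∑ π : Equiv.Perm (Fin n), Qpi Q π t := by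
      rw [Psym]
      congr 1
      apply Finset.sum_congr rfl
      intro π _
      rw [show (∏ i : Fin n, Set.indicator Δ (fun _ => (1 : ℂ)) ((t ∘ ⇑π⁻¹) i)) = 1 from
        (hI π).trans hI1, mul_one]
    rw [this, Set.indicator_of_mem hmem, norm_mul, abs_sum_Qpi q hq Q hQ t ht]
    rw [norm_inv, Complex.norm_natCast, div_eq_inv_mul]
  · have hex : ∃ i : Fin n, t i ∉ Δ := by
      by_contra hc
      push_neg at hc
      exact hmem (fun i _ => hc i)
    obtain ⟨i0, hi0⟩ := hex
    have hI0 : (∏ i : Fin n, Set.indicator Δ (fun _ => (1 : ℂ)) (t i)) = 0 :=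
      Finset.prod_eq_zero (Finset.mem_univ i0) (Set.indicator_of_notMem hi0 _)
    have : Psym Q (fun s => ∏ i : Fin n, Set.indicator Δ (fun _ => (1 : ℂ)) (s i)) t = 0 := by
      rw [Psym]
      have : ∀ π : Equiv.Perm (Fin n),
          Qpi Q π t * (∏ i : Fin n, Set.indicator Δ (fun _ => (1 : ℂ)) ((t ∘ ⇑π⁻¹) i)) = 0 := by
        intro π
        rw [hI π, hI0, mul_zero]
      rw [Finset.sum_congr rfl (fun π _ => this π), Finset.sum_const, smul_zero, mul_zero]
    rw [this, Set.indicator_of_notMem hmem]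
    simp

section MeasurePart
variable {T : Type*} [MeasurableSpace T]

lemma pi_pair_null (ν : Measure T) [IsFiniteMeasure ν]
    (hD : MeasurableSet {p : T × T | p.1 = p.2})
    (hνd : (ν.prod ν) {p : T × T | p.1 = p.2} = 0)
    {n : ℕ} (i j : Fin n) (hij : i ≠ j) :
    Measure.pi (fun _ : Fin n => ν) {t : Fin n → T | t i = t j} = 0 := by
  classical
  set m : (Fin n → T) → T × T := fun t => (t i, t j) with hm_def
  have hm : Measurable m := (measurable_pi_apply i).prodMk (measurable_pi_apply j)
  set C : ℝ≥0∞ := ∏ k ∈ ({i, j} : Finset (Fin n))ᶜ, ν Set.univ with hC_def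
  have hCfin : C < ⊤ := by
    apply ENNReal.prod_lt_top
    intro k _
    exact measure_lt_top ν Set.univ
  haveI : IsFiniteMeasure (C • ν) := by
    constructor
    rw [Measure.smul_apply, smul_eq_mul]
    exact ENNReal.mul_lt_top hCfin (measure_lt_top ν Set.univ)
  have hmap : (C • ν).prod ν = (Measure.pi fun _ : Fin n => ν).map m := by
    apply Measure.prod_eq
    intro s u hs hu
    rw [Measure.map_apply hm (hs.prod hu)]
    have hpre : m ⁻¹' (s ×ˢ u)
        = Set.pi Set.univ (fun k => if k = i then s else if k = j then u else Set.univ) := by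
      ext t
      simp only [Set.mem_preimage, Set.mem_prod, Set.mem_pi, Set.mem_univ, true_implies, hm_def]
      constructor
      · rintro ⟨h1, h2⟩ k
        by_cases hki : k = i
        · subst hki; simpa using h1
        · by_cases hkj : k = j
          · subst hkj; simp [hki, h2]
          · simp [hki, hkj]
      · intro h
        constructor
        · have := h i; simpa using this
        · have := h j
          rw [if_neg (fun hh : j = i => hij hh.symm), if_pos rfl] at this
          exact this
    rw [hpre, Measure.pi_pi]
    rw [← Finset.prod_mul_prod_compl ({i, j} : Finset (Fin n))]
    have h2 : (∏ k ∈ ({i, j} : Finset (Fin n)),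
        ν (if k = i then s else if k = j then u else Set.univ)) = ν s * ν u := by
      rw [Finset.prod_pair hij]
      rw [if_pos rfl, if_neg (fun hh : j = i => hij hh.symm), if_pos rfl]
    have h3 : (∏ k ∈ ({i, j} : Finset (Fin n))ᶜ,
        ν (if k = i then s else if k = j then u else Set.univ)) = C := by
      rw [hC_def]
      apply Finset.prod_congr rfl
      intro k hk
      simp only [Finset.mem_compl, Finset.mem_insert, Finset.mem_singleton, not_or] at hk
      rw [if_neg hk.1, if_neg hk.2]
    rw [h2, h3, Measure.smul_apply, smul_eq_mul]
    ring
  have hset : {t : Fin n → T | t i = t j} = m ⁻¹' {p : T × T | p.1 = p.2} := rfl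
  rw [hset, ← Measure.map_apply hm hD, ← hmap]
  rw [Measure.prod_apply hD]
  rw [lintegral_smul_measure]
  rw [Measure.prod_apply hD] at hνd
  rw [hνd, smul_zero]

end MeasurePart

lemma psym_zero {T : Type*} [LinearOrder T] (Q : T → T → ℂ)
    (Δ : Set T) {n : ℕ} (t : Fin n → T)
    (hmem : t ∉ Set.pi Set.univ fun _ : Fin n => Δ) :
    Psym Q (fun s => ∏ i : Fin n, Set.indicator Δ (fun _ => (1 : ℂ)) (s i)) t = 0 := by
  have hex : ∃ i : Fin n, t i ∉ Δ := by
    by_contra hc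
    push_neg at hc
    exact hmem (fun i _ => hc i)
  obtain ⟨i0, hi0⟩ := hex
  have hI0 : (∏ i : Fin n, Set.indicator Δ (fun _ => (1 : ℂ)) (t i)) = 0 :=
    Finset.prod_eq_zero (Finset.mem_univ i0) (Set.indicator_of_notMem hi0 _)
  rw [Psym]
  have h0 : ∀ π : Equiv.Perm (Fin n),
      Qpi Q π t * (∏ i : Fin n, Set.indicator Δ (fun _ => (1 : ℂ)) ((t ∘ ⇑π⁻¹) i)) = 0 := by
    intro π
    have hIπ : (∏ i : Fin n, Set.indicator Δ (fun _ => (1 : ℂ)) ((t ∘ ⇑π⁻¹) i))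
        = ∏ i : Fin n, Set.indicator Δ (fun _ => (1 : ℂ)) (t i) :=
      Equiv.prod_comp π⁻¹ (fun i => Set.indicator Δ (fun _ => (1 : ℂ)) (t i))
    rw [hIπ, hI0, mul_zero]
  rw [Finset.sum_congr rfl (fun π _ => h0 π), Finset.sum_const, smul_zero, mul_zero]

/-- in the anyonic `Q`-Fock space the `n`-particle vector
`χ_Δ^{⊛n} = P_n(χ_Δ^{⊗n})` has squared Fock norm (with weight `n!`)
`‖χ_Δ^{⊛n}‖² = |[n]_q!|² σ(Δ)ⁿ / n!`. -/
theorem anyon_power_norm {T : Type*} [LinearOrder T] [MeasurableSpace T]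
    (σ : Measure T) [SigmaFinite σ]
    (hord : MeasurableSet {p : T × T | p.1 < p.2})
    (hdiag : (σ.prod σ) {p : T × T | p.1 = p.2} = 0)
    (q : ℂ) (hq : ‖q‖ = 1) (hq1 : q ≠ 1)
    (Q : T → T → ℂ) (hQ : ∀ s t, Q s t = if s < t then q else (starRingEnd ℂ) q)
    (Δ : Set T) (hΔ : MeasurableSet Δ)
    (a : ℝ) (ha : 0 ≤ a) (hσΔ : σ Δ = ENNReal.ofReal a)
    (n : ℕ) :
    (n.factorial : ℝ) *
      ∫ t, ‖Psym Q
          (fun s => ∏ i : Fin n, Set.indicator Δ (fun _ => (1 : ℂ)) (s i)) t‖ ^ 2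
        ∂(Measure.pi fun _ : Fin n => σ)
      = ‖∏ k ∈ Finset.range n, ∑ i ∈ Finset.range (k + 1), q ^ i‖ ^ 2
          * a ^ n / (n.factorial : ℝ) := by
  classical
  set μ := Measure.pi fun _ : Fin n => σ with hμ_def
  set ν := σ.restrict Δ with hν_def
  set G := ∏ k ∈ Finset.range n, ∑ i ∈ Finset.range (k + 1), q ^ i with hG_def
  set ΔN := Set.pi Set.univ fun _ : Fin n => Δ with hΔN_def
  have hΔNm : MeasurableSet ΔN := MeasurableSet.univ_pi (fun _ => hΔ)
  haveI : IsFiniteMeasure ν := by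
    constructor
    rw [hν_def, Measure.restrict_apply_univ, hσΔ]
    exact ENNReal.ofReal_lt_top
  -- diagonal is measurable
  have hD : MeasurableSet {p : T × T | p.1 = p.2} := by
    have h1 : MeasurableSet {p : T × T | p.2 < p.1} :=
      measurable_swap hord
    have hset : {p : T × T | p.1 = p.2}
        = ({p : T × T | p.1 < p.2} ∪ {p : T × T | p.2 < p.1})ᶜ := by
      ext p
      simp only [Set.mem_setOf_eq, Set.mem_compl_iff, Set.mem_union, not_or, not_lt]
      constructor
      · intro h; exact ⟨le_of_eq h.symm, le_of_eq h⟩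
      · intro h; exact le_antisymm h.2 h.1
    rw [hset]
    exact (hord.union h1).compl
  -- ν.prod ν kills the diagonal
  have hνd : (ν.prod ν) {p : T × T | p.1 = p.2} = 0 := by
    rw [Measure.prod_apply hD]
    rw [Measure.prod_apply hD] at hdiag
    refine le_antisymm ?_ zero_le
    rw [← hdiag]
    exact lintegral_mono' Measure.restrict_le_self
      (fun x => Measure.le_iff'.1 Measure.restrict_le_self _)
  -- restriction of the product measure to Δ^n
  have hrestrict : Measure.pi (fun _ : Fin n => ν) = μ.restrict ΔN := by
    apply Measure.pi_eq
    intro s hs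
    rw [Measure.restrict_apply (MeasurableSet.univ_pi hs)]
    have : Set.pi Set.univ s ∩ ΔN = Set.pi Set.univ (fun i => s i ∩ Δ) := by
      rw [hΔN_def, ← Set.pi_inter_distrib]
    rw [this, hμ_def, Measure.pi_pi]
    exact Finset.prod_congr rfl (fun i _ => (Measure.restrict_apply (hs i)).symm)
  -- the bad set is null
  have hbad : μ (ΔN ∩ {t : Fin n → T | ¬Function.Injective t}) = 0 := by
    have hsub : ΔN ∩ {t : Fin n → T | ¬Function.Injective t}
        ⊆ ⋃ i : Fin n, ⋃ j : Fin n, ⋃ _ : i ≠ j, (ΔN ∩ {t : Fin n → T | t i = t j}) := by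
      rintro t ⟨htΔ, htN⟩
      simp only [Set.mem_setOf_eq, Function.Injective] at htN
      push_neg at htN
      obtain ⟨i, j, heq, hne⟩ := htN
      exact Set.mem_iUnion.2 ⟨i, Set.mem_iUnion.2 ⟨j, Set.mem_iUnion.2 ⟨hne, ⟨htΔ, heq⟩⟩⟩⟩
    refine measure_mono_null hsub ?_
    refine measure_iUnion_null fun i => measure_iUnion_null fun j => measure_iUnion_null fun hij => ?_
    have hSm : MeasurableSet {t : Fin n → T | t i = t j} := by
      have hset : {t : Fin n → T | t i = t j}
          = (fun a : Fin n → T => (a i, a j)) ⁻¹' {p : T × T | p.1 = p.2} := rfl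
      rw [hset]
      exact ((measurable_pi_apply i).prodMk (measurable_pi_apply j)) hD
    rw [Set.inter_comm, ← Measure.restrict_apply hSm, ← hrestrict]
    exact pi_pair_null ν hD hνd i j hij
  -- a.e. identification of the integrand
  set c : ℝ := (‖G‖ / (n.factorial : ℝ)) ^ 2 with hc_def
  have hae : (fun t => ‖Psym Q
        (fun s => ∏ i : Fin n, Set.indicator Δ (fun _ => (1 : ℂ)) (s i)) t‖ ^ 2)
      =ᵐ[μ] (fun t => Set.indicator ΔN (fun _ => c) t) := by
    rw [Filter.EventuallyEq, ae_iff]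
    refine measure_mono_null ?_ hbad
    intro t hne
    simp only [Set.mem_setOf_eq] at hne
    by_cases hmem : t ∈ ΔN
    · constructor
      · exact hmem
      · intro hinj
        exact hne (psym_pointwise q hq Q hQ Δ t hinj)
    · exfalso
      apply hne
      rw [psym_zero Q Δ t hmem, Set.indicator_of_notMem hmem]
      simp
  rw [integral_congr_ae hae]
  rw [MeasureTheory.integral_indicator_const c hΔNm]
  have hμΔN : μ ΔN = ENNReal.ofReal a ^ n := by
    rw [hμ_def, hΔN_def, Measure.pi_pi]
    simp [hσΔ]
  rw [Measure.real, hμΔN]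
  rw [smul_eq_mul]
  have htoReal : (ENNReal.ofReal a ^ n).toReal = a ^ n := by
    rw [ENNReal.toReal_pow, ENNReal.toReal_ofReal ha]
  rw [htoReal, hc_def]
  have hfact : ((n.factorial : ℝ)) ≠ 0 := Nat.cast_ne_zero.mpr (Nat.factorial_ne_zero n)
  field_simp
end

section
/- Commutation relation between annihilation and creation operators: for g, h ∈ L²(T) and any Q-symmetric f^{(n)}, a⁻(g) a⁺(h) f^{(n)} equals the pointwise expression ∫ σ(ds) conj(g(s)) [h(s) f^{(n)}(t_1,...,t_n) + Σ_{k=1}^n Q(s,t_k) Q(t_1,t_k)···Q(t_{k-1},t_k) h(t_k) f^{(n)}(s, t_1,...,ť_k,...,t_n)], which is the sum of (g,h)_{L²} f^{(n)} and the Q-twisted term a⁺-after-a⁻ evaluated with kernel Q; informally, ∂_s ∂†_t = δ(s,t) + Q(s,t) ∂†_t ∂_s. -/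
open MeasureTheory

/-- `f` is `Q`-symmetric in its `n+1` variables. -/
def QSymmF {T : Type*} (Q : T → T → ℂ) {n : ℕ} (f : (Fin (n + 1) → T) → ℂ) : Prop :=
  ∀ (j : Fin n) (t : Fin (n + 1) → T),
    f t = Q (t j.castSucc) (t j.succ) * f (t ∘ Equiv.swap j.castSucc j.succ)

/-- The creation operator: `a⁺(h) f = P_{n+1}(h ⊗ f)`. -/
noncomputable def creation {T : Type*} (Q : T → T → ℂ) {n : ℕ} (h : T → ℂ)
    (f : (Fin n → T) → ℂ) : (Fin (n + 1) → T) → ℂ :=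
  Psym Q (fun t => h (t 0) * f (t ∘ Fin.succ))

/-- The annihilation operator on the `(n+1)`-particle space:
`(a⁻(g) F)(t_1,…,t_n) = (n+1) ∫ conj(g(s)) F(s,t_1,…,t_n) dσ(s)`. -/
noncomputable def annihilation {T : Type*} [MeasurableSpace T] (σ : Measure T) {n : ℕ}
    (g : T → ℂ) (F : (Fin (n + 1) → T) → ℂ) : (Fin n → T) → ℂ :=
  fun t => ((n : ℂ) + 1) * ∫ s, (starRingEnd ℂ) (g s) * F (Fin.cons s t) ∂σ

open Finset Equiv
/-- extension of a permutation of `Fin m` to `Fin (m+1)` fixing `0`. -/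
def extPerm {m : ℕ} (σ : Equiv.Perm (Fin m)) : Equiv.Perm (Fin (m + 1)) where
  toFun := Fin.cons 0 (Fin.succ ∘ σ)
  invFun := Fin.cons 0 (Fin.succ ∘ σ.symm)
  left_inv x := by
    induction x using Fin.cases with
    | zero => simp
    | succ j => simp
  right_inv x := by
    induction x using Fin.cases with
    | zero => simp
    | succ j => simp

@[simp] lemma extPerm_zero {m : ℕ} (σ : Equiv.Perm (Fin m)) : extPerm σ 0 = 0 := rfl

@[simp] lemma extPerm_succ {m : ℕ} (σ : Equiv.Perm (Fin m)) (j : Fin m) :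
    extPerm σ j.succ = (σ j).succ := by
  show (Fin.cons 0 (Fin.succ ∘ σ) : Fin (m+1) → Fin (m+1)) j.succ = _
  simp

lemma extCR_apply_self {m : ℕ} (σ : Equiv.Perm (Fin m)) (k : Fin (m + 1)) :
    (extPerm σ * Fin.cycleRange k) k = 0 := by
  simp [Equiv.Perm.mul_apply, Fin.cycleRange_self]

lemma extCR_apply_succAbove {m : ℕ} (σ : Equiv.Perm (Fin m)) (k : Fin (m + 1)) (j : Fin m) :
    (extPerm σ * Fin.cycleRange k) (k.succAbove j) = (σ j).succ := by
  simp [Equiv.Perm.mul_apply, Fin.cycleRange_succAbove]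

lemma extCR_bijective (m : ℕ) :
    Function.Bijective (fun p : Fin (m + 1) × Equiv.Perm (Fin m) =>
      extPerm p.2 * Fin.cycleRange p.1) := by
  rw [Fintype.bijective_iff_injective_and_card]
  constructor
  · rintro ⟨k, σ⟩ ⟨k', σ'⟩ hEq
    simp only at hEq
    have hk : k = k' := by
      apply (extPerm σ' * Fin.cycleRange k').injective
      rw [extCR_apply_self, ← hEq, extCR_apply_self]
    subst hk
    have hσ : extPerm σ = extPerm σ' := mul_right_cancel hEq
    have : σ = σ' := by
      ext j
      have h2 := congrArg (fun e : Equiv.Perm (Fin (m+1)) => e j.succ) hσ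
      exact congrArg Fin.val (by simpa [Fin.succ_inj] using h2)
    rw [this]
  · simp [Fintype.card_perm, Nat.factorial_succ]

lemma comp_inv_extCR {T : Type*} {m : ℕ} (σ : Equiv.Perm (Fin m)) (k : Fin (m + 1))
    (u : Fin (m + 1) → T) :
    u ∘ ⇑(extPerm σ * Fin.cycleRange k)⁻¹ =
      Fin.cons (u k) ((u ∘ k.succAbove) ∘ ⇑σ⁻¹) := by
  funext j
  induction j using Fin.cases with
  | zero =>
    have h := extCR_apply_self σ k
    simp only [Function.comp_apply, Fin.cons_zero]
    rw [← h, Equiv.Perm.inv_def, Equiv.symm_apply_apply]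
  | succ i =>
    have h : (extPerm σ * Fin.cycleRange k) (k.succAbove (σ⁻¹ i)) = i.succ := by
      rw [extCR_apply_succAbove, Equiv.Perm.inv_def, Equiv.apply_symm_apply]
    simp only [Function.comp_apply, Fin.cons_succ]
    rw [← h, Equiv.Perm.inv_def, Equiv.symm_apply_apply]

lemma Qpi_decomp {T : Type*} (Q : T → T → ℂ) {m : ℕ} (σ : Equiv.Perm (Fin m))
    (k : Fin (m + 1)) (u : Fin (m + 1) → T) :
    Qpi Q (extPerm σ * Fin.cycleRange k) u =
      (∏ i ∈ Finset.univ.filter (fun i : Fin (m + 1) => i < k), Q (u i) (u k)) *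
        Qpi Q σ (u ∘ k.succAbove) := by
  classical
  set π := extPerm σ * Fin.cycleRange k with hπ
  have hπ0 : ∀ i : Fin (m + 1), i ≠ k → 0 < π i := by
    intro i hi
    obtain ⟨a, ha⟩ := Fin.exists_succAbove_eq hi
    rw [← ha, extCR_apply_succAbove]
    exact Fin.succ_pos _
  set S₁ : Finset (Fin (m + 1) × Fin (m + 1)) :=
    (Finset.univ.filter (fun i : Fin (m + 1) => i < k)).image (fun i => (i, k)) with hS₁
  set S₂ : Finset (Fin (m + 1) × Fin (m + 1)) :=
    (Finset.univ.filter (fun p : Fin m × Fin m => p.1 < p.2 ∧ σ p.2 < σ p.1)).image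
      (fun p => (k.succAbove p.1, k.succAbove p.2)) with hS₂
  have hset : Finset.univ.filter
      (fun p : Fin (m + 1) × Fin (m + 1) => p.1 < p.2 ∧ π p.2 < π p.1) = S₁ ∪ S₂ := by
    ext ⟨i, j⟩
    simp only [hS₁, hS₂, Finset.mem_filter, Finset.mem_univ, true_and, Finset.mem_union,
      Finset.mem_image, Prod.mk.injEq]
    constructor
    · rintro ⟨hij, hπji⟩
      by_cases hjk : j = k
      · subst hjk
        exact Or.inl ⟨i, hij, rfl, rfl⟩
      · obtain ⟨b, hb⟩ := Fin.exists_succAbove_eq hjk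
        have hik : i ≠ k := by
          rintro rfl
          rw [extCR_apply_self] at hπji
          exact (Fin.not_lt_zero _) hπji
        obtain ⟨a, ha⟩ := Fin.exists_succAbove_eq hik
        refine Or.inr ⟨⟨a, b⟩, ⟨?_, ?_⟩, ha, hb⟩
        · rw [← ha, ← hb] at hij
          exact Fin.succAbove_lt_succAbove_iff.mp hij
        · rw [← ha, ← hb, extCR_apply_succAbove, extCR_apply_succAbove] at hπji
          exact Fin.succ_lt_succ_iff.mp hπji
    · rintro (⟨i', hi', rfl, rfl⟩ | ⟨⟨a, b⟩, ⟨hab, hσ⟩, rfl, rfl⟩)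
      · refine ⟨hi', ?_⟩
        rw [extCR_apply_self]
        exact hπ0 _ (Fin.ne_of_lt hi')
      · refine ⟨Fin.succAbove_lt_succAbove_iff.mpr hab, ?_⟩
        rw [extCR_apply_succAbove, extCR_apply_succAbove]
        exact Fin.succ_lt_succ_iff.mpr hσ
  have hdisj : Disjoint S₁ S₂ := by
    rw [Finset.disjoint_left]
    rintro p hp1 hp2
    simp only [hS₁, hS₂, Finset.mem_image, Finset.mem_filter] at hp1 hp2
    obtain ⟨i', _, rfl⟩ := hp1
    obtain ⟨⟨a, b⟩, _, hq⟩ := hp2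
    have := congrArg Prod.snd hq
    exact Fin.succAbove_ne k b this
  rw [Qpi, hset, Finset.prod_union hdisj]
  congr 1
  · rw [hS₁, Finset.prod_image]
    intro a _ b _ hab
    exact (Prod.mk.injEq _ _ _ _ ▸ hab).1
  · rw [hS₂, Finset.prod_image]
    · rfl
    · rintro ⟨a, b⟩ _ ⟨a', b'⟩ _ hab
      simp only [Prod.mk.injEq] at hab
      have h1 := Fin.succAbove_right_injective (p := k) hab.1
      have h2 := Fin.succAbove_right_injective (p := k) hab.2
      simp [h1, h2, Prod.ext_iff]


lemma swap_succAbove {m : ℕ} (k : Fin m) (j : Fin m) :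
    Equiv.swap k.castSucc k.succ (k.castSucc.succAbove j) = k.succ.succAbove j := by
  rcases lt_trichotomy j k with hlt | rfl | hgt
  · rw [Fin.succAbove_of_castSucc_lt _ _ (Fin.castSucc_lt_castSucc_iff.mpr hlt),
      Fin.succAbove_of_castSucc_lt _ _ ((Fin.castSucc_lt_castSucc_iff.mpr hlt).trans
        (Fin.castSucc_lt_succ (i := k))),
      Equiv.swap_apply_of_ne_of_ne]
    · exact Fin.ne_of_lt (Fin.castSucc_lt_castSucc_iff.mpr hlt)
    · exact Fin.ne_of_lt ((Fin.castSucc_lt_castSucc_iff.mpr hlt).trans (Fin.castSucc_lt_succ (i := k)))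
  · rw [Fin.succAbove_of_le_castSucc _ _ le_rfl,
      Fin.succAbove_of_castSucc_lt _ _ (Fin.castSucc_lt_succ (i := j)),
      Equiv.swap_apply_right]
  · rw [Fin.succAbove_of_le_castSucc _ _ (Fin.castSucc_le_castSucc_iff.mpr hgt.le),
      Fin.succAbove_of_le_castSucc _ _ (Fin.succ_le_castSucc_iff.mpr hgt),
      Equiv.swap_apply_of_ne_of_ne]
    · exact Fin.ne_of_gt (Fin.castSucc_lt_succ_iff.mpr hgt.le)
    · exact fun hc => hgt.ne' (Fin.succ_injective _ hc)

lemma move_front {T : Type*} (Q : T → T → ℂ) {m : ℕ} (f : (Fin (m + 1) → T) → ℂ)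
    (hf : QSymmF Q f) (k : Fin (m + 1)) :
    ∀ t : Fin (m + 1) → T,
      (∏ i ∈ Finset.univ.filter (fun i : Fin (m + 1) => i < k), Q (t i) (t k)) *
        f (Fin.cons (t k) (t ∘ k.succAbove)) = f t := by
  induction k using Fin.induction with
  | zero =>
    intro t
    have h1 : Finset.univ.filter (fun i : Fin (m + 1) => i < 0) = ∅ := by
      simp [Finset.filter_eq_empty_iff]
    have h2 : Fin.cons (t 0) (t ∘ Fin.succAbove 0) = t := by
      funext j
      induction j using Fin.cases <;> simp
    rw [h1, h2, Finset.prod_empty, one_mul]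
  | succ k ih =>
    intro t
    set t' : Fin (m + 1) → T := t ∘ Equiv.swap k.castSucc k.succ with ht'
    have key1 : (Fin.cons (t k.succ) (t ∘ k.succ.succAbove) : Fin (m + 1) → T) =
        (Fin.cons (t' k.castSucc) (t' ∘ k.castSucc.succAbove) : Fin (m + 1) → T) := by
      funext j
      induction j using Fin.cases with
      | zero => simp [ht', Equiv.swap_apply_left]
      | succ i =>
        simp only [Fin.cons_succ, ht', Function.comp_apply]
        rw [swap_succAbove]
    have key2 : (∏ i ∈ Finset.univ.filter (fun i : Fin (m + 1) => i < k.castSucc),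
        Q (t' i) (t' k.castSucc)) =
        ∏ i ∈ Finset.univ.filter (fun i : Fin (m + 1) => i < k.castSucc),
          Q (t i) (t k.succ) := by
      apply Finset.prod_congr rfl
      intro i hi
      rw [Finset.mem_filter] at hi
      have h1 : t' i = t i := by
        rw [ht']
        simp only [Function.comp_apply]
        rw [Equiv.swap_apply_of_ne_of_ne (Fin.ne_of_lt hi.2)
          (Fin.ne_of_lt (hi.2.trans (Fin.castSucc_lt_succ (i := k))))]
      have h2 : t' k.castSucc = t k.succ := by
        simp [ht', Equiv.swap_apply_left]
      rw [h1, h2]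
    have key3 : Finset.univ.filter (fun i : Fin (m + 1) => i < k.succ) =
        insert k.castSucc (Finset.univ.filter (fun i : Fin (m + 1) => i < k.castSucc)) := by
      ext i
      simp only [Finset.mem_filter, Finset.mem_univ, true_and, Finset.mem_insert]
      constructor
      · intro hi
        rcases eq_or_lt_of_le (Fin.le_castSucc_iff.mpr hi) with h | h
        · exact Or.inl h
        · exact Or.inr h
      · rintro (rfl | hi)
        · exact Fin.castSucc_lt_succ (i := k)
        · exact hi.trans (Fin.castSucc_lt_succ (i := k))
    have hnm : k.castSucc ∉ Finset.univ.filter (fun i : Fin (m + 1) => i < k.castSucc) := by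
      simp
    rw [key1, key3, Finset.prod_insert hnm, mul_assoc, ← key2, ih t']
    exact (hf k t).symm

lemma qsym_perm {T : Type*} (Q : T → T → ℂ) :
    ∀ (m : ℕ) (f : (Fin m → T) → ℂ),
      (∀ a b : Fin m, (a : ℕ) + 1 = (b : ℕ) →
        ∀ t, f t = Q (t a) (t b) * f (t ∘ Equiv.swap a b)) →
      ∀ (π : Equiv.Perm (Fin m)) (t : Fin m → T), f t = Qpi Q π t * f (t ∘ ⇑π⁻¹) := by
  intro m
  induction m with
  | zero =>
    intro f _ π t
    have h1 : t ∘ ⇑π⁻¹ = t := funext fun i => i.elim0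
    have h2 : Qpi Q π t = 1 := Finset.prod_eq_one fun p _ => p.1.elim0
    rw [h1, h2, one_mul]
  | succ m ih =>
    intro f hf π t
    obtain ⟨⟨k, σ⟩, hkσ⟩ := (extCR_bijective m).2 π
    simp only at hkσ
    subst hkσ
    set v : Fin m → T := t ∘ k.succAbove with hv
    set g : (Fin m → T) → ℂ := fun w => f (Fin.cons (t k) w) with hg
    have hgsym : ∀ a b : Fin m, (a : ℕ) + 1 = (b : ℕ) →
        ∀ w, g w = Q (w a) (w b) * g (w ∘ Equiv.swap a b) := by
      intro a b hab w
      have hcons : (Fin.cons (t k) w : Fin (m+1) → T) ∘ ⇑(Equiv.swap a.succ b.succ) =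
          Fin.cons (t k) (w ∘ ⇑(Equiv.swap a b)) := by
        funext j
        induction j using Fin.cases with
        | zero =>
          simp only [Function.comp_apply]
          rw [Equiv.swap_apply_of_ne_of_ne (Fin.succ_ne_zero a).symm (Fin.succ_ne_zero b).symm]
          simp
        | succ i =>
          simp only [Function.comp_apply, Fin.cons_succ]
          rcases eq_or_ne i a with rfl | hia
          · rw [Equiv.swap_apply_left, Equiv.swap_apply_left, Fin.cons_succ]
          · rcases eq_or_ne i b with rfl | hib
            · rw [Equiv.swap_apply_right, Equiv.swap_apply_right, Fin.cons_succ]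
            · rw [Equiv.swap_apply_of_ne_of_ne (fun hc => hia (Fin.succ_injective _ hc))
                (fun hc => hib (Fin.succ_injective _ hc)),
                Equiv.swap_apply_of_ne_of_ne hia hib, Fin.cons_succ]
      have h := hf a.succ b.succ (by simp [Fin.val_succ]; omega) (Fin.cons (t k) w)
      rw [hcons] at h
      simpa [hg, Fin.cons_succ] using h
    have hA := ih g hgsym σ v
    have hπinv : t ∘ ⇑(extPerm σ * Fin.cycleRange k)⁻¹ =
        Fin.cons (t k) (v ∘ ⇑σ⁻¹) := comp_inv_extCR σ k t
    have hfQ : QSymmF Q f := fun j u => hf j.castSucc j.succ (by simp) u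
    rw [hπinv, Qpi_decomp]
    symm
    calc (∏ i ∈ Finset.univ.filter (fun i : Fin (m + 1) => i < k), Q (t i) (t k)) *
          Qpi Q σ (t ∘ k.succAbove) * f (Fin.cons (t k) (v ∘ ⇑σ⁻¹))
        = (∏ i ∈ Finset.univ.filter (fun i : Fin (m + 1) => i < k), Q (t i) (t k)) *
          (Qpi Q σ v * g (v ∘ ⇑σ⁻¹)) := by rw [hg, hv, mul_assoc]
      _ = (∏ i ∈ Finset.univ.filter (fun i : Fin (m + 1) => i < k), Q (t i) (t k)) *
          g v := by rw [← hA]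
      _ = f t := move_front Q f hfQ k t


lemma qsym_perm' {T : Type*} (Q : T → T → ℂ) {m : ℕ} (f : (Fin (m + 1) → T) → ℂ)
    (hf : QSymmF Q f) (π : Equiv.Perm (Fin (m + 1))) (t : Fin (m + 1) → T) :
    f t = Qpi Q π t * f (t ∘ ⇑π⁻¹) := by
  apply qsym_perm Q (m + 1) f _ π t
  intro a b hab u
  have ha : (a : ℕ) < m := by omega
  have hca : (⟨(a : ℕ), ha⟩ : Fin m).castSucc = a := by
    apply Fin.ext; simp
  have hsa : (⟨(a : ℕ), ha⟩ : Fin m).succ = b := by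
    apply Fin.ext; simp [Fin.val_succ, hab]
  have := hf ⟨(a : ℕ), ha⟩ u
  rwa [hca, hsa] at this

lemma creation_apply {T : Type*} (Q : T → T → ℂ) {n : ℕ} (h : T → ℂ)
    (f : (Fin (n + 1) → T) → ℂ) (hf : QSymmF Q f) (u : Fin (n + 2) → T) :
    creation Q h f u = (((n : ℂ) + 2))⁻¹ * ∑ k : Fin (n + 2),
      (∏ i ∈ Finset.univ.filter (fun i : Fin (n + 2) => i < k), Q (u i) (u k)) *
        (h (u k) * f (u ∘ k.succAbove)) := by
  have hsum : ∑ π : Equiv.Perm (Fin (n + 2)),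
      Qpi Q π u * (h ((u ∘ ⇑π⁻¹) 0) * f ((u ∘ ⇑π⁻¹) ∘ Fin.succ)) =
      ∑ p : Fin (n + 2) × Equiv.Perm (Fin (n + 1)),
        Qpi Q (extPerm p.2 * Fin.cycleRange p.1) u *
          (h ((u ∘ ⇑(extPerm p.2 * Fin.cycleRange p.1)⁻¹) 0) *
            f ((u ∘ ⇑(extPerm p.2 * Fin.cycleRange p.1)⁻¹) ∘ Fin.succ)) :=
    ((extCR_bijective (n + 1)).sum_comp _).symm
  have hterm : ∀ (k : Fin (n + 2)) (σ : Equiv.Perm (Fin (n + 1))),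
      Qpi Q (extPerm σ * Fin.cycleRange k) u *
        (h ((u ∘ ⇑(extPerm σ * Fin.cycleRange k)⁻¹) 0) *
          f ((u ∘ ⇑(extPerm σ * Fin.cycleRange k)⁻¹) ∘ Fin.succ)) =
      (∏ i ∈ Finset.univ.filter (fun i : Fin (n + 2) => i < k), Q (u i) (u k)) *
        (h (u k) * f (u ∘ k.succAbove)) := by
    intro k σ
    rw [comp_inv_extCR, Qpi_decomp]
    have h0 : (Fin.cons (u k) ((u ∘ k.succAbove) ∘ ⇑σ⁻¹) : Fin (n + 2) → T) 0 = u k :=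
      Fin.cons_zero _ _
    have h1 : (Fin.cons (u k) ((u ∘ k.succAbove) ∘ ⇑σ⁻¹) : Fin (n + 2) → T) ∘ Fin.succ =
        (u ∘ k.succAbove) ∘ ⇑σ⁻¹ := funext fun j => Fin.cons_succ _ _ _
    rw [h0, h1, qsym_perm' Q f hf σ (u ∘ k.succAbove)]
    ring
  have hcount : ∑ p : Fin (n + 2) × Equiv.Perm (Fin (n + 1)),
      (∏ i ∈ Finset.univ.filter (fun i : Fin (n + 2) => i < p.1), Q (u i) (u p.1)) *
        (h (u p.1) * f (u ∘ p.1.succAbove)) =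
      ((n + 1).factorial : ℂ) * ∑ k : Fin (n + 2),
        (∏ i ∈ Finset.univ.filter (fun i : Fin (n + 2) => i < k), Q (u i) (u k)) *
          (h (u k) * f (u ∘ k.succAbove)) := by
    rw [Fintype.sum_prod_type]
    rw [Finset.mul_sum]
    apply Finset.sum_congr rfl
    intro k _
    rw [show (∑ y : Equiv.Perm (Fin (n + 1)),
        (∏ i ∈ Finset.univ.filter (fun i : Fin (n + 2) => i < (k, y).1), Q (u i) (u (k, y).1)) *
          (h (u (k, y).1) * f (u ∘ (k, y).1.succAbove))) =
      ∑ _y : Equiv.Perm (Fin (n + 1)),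
        (∏ i ∈ Finset.univ.filter (fun i : Fin (n + 2) => i < k), Q (u i) (u k)) *
          (h (u k) * f (u ∘ k.succAbove)) from rfl]
    rw [Finset.sum_const, Finset.card_univ, Fintype.card_perm, Fintype.card_fin,
      nsmul_eq_mul]
  show (((n + 2).factorial : ℂ))⁻¹ * _ = _
  rw [hsum]
  have : ∀ p : Fin (n + 2) × Equiv.Perm (Fin (n + 1)),
      Qpi Q (extPerm p.2 * Fin.cycleRange p.1) u *
        (h ((u ∘ ⇑(extPerm p.2 * Fin.cycleRange p.1)⁻¹) 0) *
          f ((u ∘ ⇑(extPerm p.2 * Fin.cycleRange p.1)⁻¹) ∘ Fin.succ)) =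
      (∏ i ∈ Finset.univ.filter (fun i : Fin (n + 2) => i < p.1), Q (u i) (u p.1)) *
        (h (u p.1) * f (u ∘ p.1.succAbove)) := fun p => hterm p.1 p.2
  rw [Finset.sum_congr rfl (fun p _ => this p), hcount, ← mul_assoc]
  congr 1
  have hfac : ((n + 2).factorial : ℂ) = ((n : ℂ) + 2) * ((n + 1).factorial : ℂ) := by
    rw [Nat.factorial_succ (n + 1)]
    push_cast
    ring
  have hne : ((n + 1).factorial : ℂ) ≠ 0 := by
    exact_mod_cast Nat.cast_ne_zero.mpr (Nat.factorial_ne_zero (n + 1))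
  rw [hfac, mul_inv, mul_assoc, inv_mul_cancel₀ hne, mul_one]

lemma sum_split {T : Type*} (Q : T → T → ℂ) {n : ℕ} (h : T → ℂ)
    (f : (Fin (n + 1) → T) → ℂ) (s : T) (t : Fin (n + 1) → T) :
    (∑ k : Fin (n + 2),
      (∏ i ∈ Finset.univ.filter (fun i : Fin (n + 2) => i < k),
          Q ((Fin.cons s t : Fin (n + 2) → T) i) ((Fin.cons s t : Fin (n + 2) → T) k)) *
        (h ((Fin.cons s t : Fin (n + 2) → T) k) *
          f ((Fin.cons s t : Fin (n + 2) → T) ∘ k.succAbove))) =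
    h s * f t + ∑ k : Fin (n + 1),
      Q s (t k) * (∏ i ∈ Finset.univ.filter (fun i : Fin (n + 1) => i < k),
          Q (t i) (t k)) * h (t k) * f (Fin.cons s (t ∘ k.succAbove)) := by
  rw [Fin.sum_univ_succ]
  congr 1
  · have h1 : Finset.univ.filter (fun i : Fin (n + 2) => i < 0) = ∅ := by
      simp [Finset.filter_eq_empty_iff]
    have h2 : (Fin.cons s t : Fin (n + 2) → T) ∘ Fin.succAbove 0 = t :=
      funext fun j => by simp
    rw [h1, h2, Finset.prod_empty, one_mul, Fin.cons_zero]
  · apply Finset.sum_congr rfl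
    intro k _
    have hprod : (∏ i ∈ Finset.univ.filter (fun i : Fin (n + 2) => i < k.succ),
        Q ((Fin.cons s t : Fin (n + 2) → T) i) ((Fin.cons s t : Fin (n + 2) → T) k.succ)) =
        Q s (t k) * ∏ i ∈ Finset.univ.filter (fun i : Fin (n + 1) => i < k),
          Q (t i) (t k) := by
      rw [Finset.prod_filter, Fin.prod_univ_succ]
      simp only [Fin.cons_zero, Fin.cons_succ, Fin.succ_pos, if_true,
        Fin.succ_lt_succ_iff]
      rw [← Finset.prod_filter]
    have hfun : (Fin.cons s t : Fin (n + 2) → T) ∘ k.succ.succAbove =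
        Fin.cons s (t ∘ k.succAbove) := by
      funext j
      induction j using Fin.cases with
      | zero => simp [Fin.succ_succAbove_zero]
      | succ i => simp [Fin.succ_succAbove_succ]
    rw [hprod, hfun, Fin.cons_succ]
    ring

/-- the commutation relation `∂_s ∂†_t = δ(s,t) + Q(s,t) ∂†_t ∂_s`
in smeared, pointwise form: for `Q`-symmetric `f⁽ⁿ⁾`,
`a⁻(g) a⁺(h) f = ∫ conj(g(s)) [h(s) f(t) + Σ_k Q(s,t_k) Q(t_1,t_k)⋯Q(t_{k-1},t_k)
h(t_k) f(s,t_1,…,ť_k,…,t_n)] dσ(s)`. -/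
theorem annihilation_creation_commutation {T : Type*} [MeasurableSpace T]
    (σ : Measure T) (Q : T → T → ℂ)
    (hherm : ∀ s t, (starRingEnd ℂ) (Q t s) = Q s t)
    (habs : ∀ s t, ‖Q s t‖ = 1)
    (n : ℕ) (f : (Fin (n + 1) → T) → ℂ) (hf : QSymmF Q f)
    (g h : T → ℂ) :
    annihilation σ g (creation Q h f) = fun t : Fin (n + 1) → T =>
      ∫ s, (starRingEnd ℂ) (g s) *
        (h s * f t + ∑ k : Fin (n + 1),
          Q s (t k) * (∏ i ∈ Finset.univ.filter (fun i : Fin (n + 1) => i < k),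
              Q (t i) (t k)) * h (t k) * f (Fin.cons s (t ∘ Fin.succAbove k))) ∂σ := by
  funext t
  simp only [annihilation]
  have hpt : (fun s => (starRingEnd ℂ) (g s) * creation Q h f (Fin.cons s t)) =
      fun s => ((n : ℂ) + 2)⁻¹ * ((starRingEnd ℂ) (g s) *
        (h s * f t + ∑ k : Fin (n + 1),
          Q s (t k) * (∏ i ∈ Finset.univ.filter (fun i : Fin (n + 1) => i < k),
              Q (t i) (t k)) * h (t k) * f (Fin.cons s (t ∘ Fin.succAbove k)))) := by
    funext s
    rw [creation_apply Q h f hf (Fin.cons s t), sum_split Q h f s t]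
    ring
  rw [hpt, MeasureTheory.integral_const_mul]
  have hcast : ((↑(n + 1) : ℂ) + 1) = (n : ℂ) + 2 := by push_cast; ring
  have hne : ((n : ℂ) + 2) ≠ 0 := by
    have : ((n + 2 : ℕ) : ℂ) ≠ 0 := Nat.cast_ne_zero.mpr (by omega)
    push_cast at this
    exact this
  rw [hcast, ← mul_assoc, mul_inv_cancel₀ hne, one_mul]
end
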